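/- Let w₀, w₁, w₂, d₁, d₂ be positive integers, let Q(X) = (1+d₁X)(1+d₂X)·(1+w₀X)⁻¹ ∈ ℚ[[X]], let γ₁, γ₂, γ₃ ∈ ℚ be the coefficients of X, X², X³ in Q, set S₀ = d₁d₂/w₀, S₁ = S₀γ₁, S₂ = S₀γ₁², S₀₁ = S₀γ₂, and let T(X) = 1 + ½(γ₁ − S₀)X + (1/6)(S₀² + 2S₁ − 2γ₁S₀ − γ₁² − γ₂)X² + (1/24)(2γ₁³ − 10γ₁γ₂ + 2γ₁²S₀ + 2γ₂S₀ + 3γ₁S₀² − S₀³ + 14S₀₁ + 5γ₁S₁ − 5S₀S₁ − 6S₂)X³. Then 1 − (1/(w₀w₁w₂))·(coefficient of X³ in (1+w₀X)(1+w₁X)(1+w₂X)·T(X)) = ((w₀−d₁)(w₀−d₂)/(24w₀⁴w₁w₂))·( d₁²(d₂² + 3d₂w₀ + 2w₀²) + d₁w₀(3d₂² − d₂(19w₀ + 4(w₁+w₂)) + 2w₀(w₀ − 2(w₁+w₂))) + 2w₀²(d₂² + d₂(w₀ − 2(w₁+w₂)) + 2(5w₀(w₁+w₂) + 3w₁w₂))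 ). -/

import Mathlib

open PowerSeries

/-- The linear power series `1 + r·X` over `ℚ`. -/
noncomputable def lin (r : ℚ) : ℚ⟦X⟧ := 1 + C r * X


lemma lin_inv (r : ℚ) : (lin r)⁻¹ = PowerSeries.mk fun n => (-r)^n := by
  symm
  rw [PowerSeries.eq_inv_iff_mul_eq_one]
  · ext n
    cases n with
    | zero => simp [lin]
    | succ m =>
      simp [lin, mul_add, ← mul_assoc, mul_comm _ (C r), add_comm 1 m,
        coeff_succ_mul_X, pow_succ]
      ring
  · simp [lin]


lemma coeffQ (a b r : ℚ) :
    coeff 1 (lin a * lin b * (lin r)⁻¹) = a + b - r ∧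
    coeff 2 (lin a * lin b * (lin r)⁻¹) = r^2 - (a+b)*r + a*b := by
  rw [lin_inv]
  constructor <;>
  · simp [lin, coeff_mul, Finset.Nat.sum_antidiagonal_eq_sum_range_succ_mk,
      Finset.sum_range_succ, coeff_one, coeff_X, coeff_C]
    ring

lemma coeffP (a b c : ℚ) :
    coeff 0 (lin a * lin b * lin c) = 1 ∧
    coeff 1 (lin a * lin b * lin c) = a + b + c ∧
    coeff 2 (lin a * lin b * lin c) = a*b + a*c + b*c ∧
    coeff 3 (lin a * lin b * lin c) = a*b*c := by
  refine ⟨?_, ?_, ?_, ?_⟩ <;>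
  · simp [lin, coeff_mul, Finset.Nat.sum_antidiagonal_eq_sum_range_succ_mk,
      Finset.sum_range_succ, coeff_one, coeff_X, coeff_C]
    try ring

lemma coeffT (t₁ t₂ t₃ : ℚ) :
    coeff 0 (1 + C t₁ * X + C t₂ * X ^ 2 + C t₃ * X ^ 3) = 1 ∧
    coeff 1 (1 + C t₁ * X + C t₂ * X ^ 2 + C t₃ * X ^ 3) = t₁ ∧
    coeff 2 (1 + C t₁ * X + C t₂ * X ^ 2 + C t₃ * X ^ 3) = t₂ ∧
    coeff 3 (1 + C t₁ * X + C t₂ * X ^ 2 + C t₃ * X ^ 3) = t₃ := by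
  refine ⟨?_, ?_, ?_, ?_⟩ <;> simp [coeff_one, coeff_X, coeff_X_pow]

lemma coeff3_mul (φ ψ : ℚ⟦X⟧) :
    coeff 3 (φ * ψ) = coeff 0 φ * coeff 3 ψ + coeff 1 φ * coeff 2 ψ
      + coeff 2 φ * coeff 1 ψ + coeff 3 φ * coeff 0 ψ := by
  rw [coeff_mul, Finset.Nat.sum_antidiagonal_eq_sum_range_succ_mk]
  simp [Finset.sum_range_succ]
  try ring

theorem stmt_11 (w₀ w₁ w₂ d₁ d₂ : ℕ) (hw₀ : 0 < w₀) (hw₁ : 0 < w₁) (hw₂ : 0 < w₂)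
    (hd₁ : 0 < d₁) (hd₂ : 0 < d₂)
    (Q : ℚ⟦X⟧) (hQ : Q = lin (d₁ : ℚ) * lin (d₂ : ℚ) * (lin (w₀ : ℚ))⁻¹)
    (γ₁ γ₂ γ₃ : ℚ) (hγ₁ : γ₁ = coeff 1 Q) (hγ₂ : γ₂ = coeff 2 Q)
    (hγ₃ : γ₃ = coeff 3 Q)
    (S₀ S₁ S₂ S₀₁ : ℚ) (hS₀ : S₀ = (d₁ : ℚ) * (d₂ : ℚ) / (w₀ : ℚ))
    (hS₁ : S₁ = S₀ * γ₁) (hS₂ : S₂ = S₀ * γ₁ ^ 2) (hS₀₁ : S₀₁ = S₀ * γ₂)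
    (T : ℚ⟦X⟧)
    (hT : T = 1 + C ((1 / 2) * (γ₁ - S₀)) * X
        + C ((1 / 6) * (S₀ ^ 2 + 2 * S₁ - 2 * γ₁ * S₀ - γ₁ ^ 2 - γ₂)) * X ^ 2
        + C ((1 / 24) * (2 * γ₁ ^ 3 - 10 * γ₁ * γ₂ + 2 * γ₁ ^ 2 * S₀ + 2 * γ₂ * S₀
            + 3 * γ₁ * S₀ ^ 2 - S₀ ^ 3 + 14 * S₀₁ + 5 * γ₁ * S₁ - 5 * S₀ * S₁
            - 6 * S₂)) * X ^ 3) :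
    1 - (1 / ((w₀ : ℚ) * (w₁ : ℚ) * (w₂ : ℚ))) *
        coeff 3 (lin (w₀ : ℚ) * lin (w₁ : ℚ) * lin (w₂ : ℚ) * T) =
      (((w₀ : ℚ) - (d₁ : ℚ)) * ((w₀ : ℚ) - (d₂ : ℚ)) /
          (24 * (w₀ : ℚ) ^ 4 * (w₁ : ℚ) * (w₂ : ℚ))) *
        ((d₁ : ℚ) ^ 2 * ((d₂ : ℚ) ^ 2 + 3 * (d₂ : ℚ) * (w₀ : ℚ) + 2 * (w₀ : ℚ) ^ 2)
          + (d₁ : ℚ) * (w₀ : ℚ) *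
              (3 * (d₂ : ℚ) ^ 2
                - (d₂ : ℚ) * (19 * (w₀ : ℚ) + 4 * ((w₁ : ℚ) + (w₂ : ℚ)))
                + 2 * (w₀ : ℚ) * ((w₀ : ℚ) - 2 * ((w₁ : ℚ) + (w₂ : ℚ))))
          + 2 * (w₀ : ℚ) ^ 2 *
              ((d₂ : ℚ) ^ 2 + (d₂ : ℚ) * ((w₀ : ℚ) - 2 * ((w₁ : ℚ) + (w₂ : ℚ)))
                + 2 * (5 * (w₀ : ℚ) * ((w₁ : ℚ) + (w₂ : ℚ))
                    + 3 * (w₁ : ℚ) * (w₂ : ℚ)))) := by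
  have hw₀' : (w₀ : ℚ) ≠ 0 := Nat.cast_ne_zero.mpr hw₀.ne'
  have hw₁' : (w₁ : ℚ) ≠ 0 := Nat.cast_ne_zero.mpr hw₁.ne'
  have hw₂' : (w₂ : ℚ) ≠ 0 := Nat.cast_ne_zero.mpr hw₂.ne'
  obtain ⟨hq1, hq2⟩ := coeffQ (d₁ : ℚ) (d₂ : ℚ) (w₀ : ℚ)
  rw [hQ] at hγ₁ hγ₂
  rw [hq1] at hγ₁
  rw [hq2] at hγ₂
  obtain ⟨hP0, hP1, hP2, hP3⟩ := coeffP (w₀ : ℚ) (w₁ : ℚ) (w₂ : ℚ)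
  obtain ⟨hT0, hT1, hT2, hT3⟩ := coeffT ((1 / 2) * (γ₁ - S₀))
    ((1 / 6) * (S₀ ^ 2 + 2 * S₁ - 2 * γ₁ * S₀ - γ₁ ^ 2 - γ₂))
    ((1 / 24) * (2 * γ₁ ^ 3 - 10 * γ₁ * γ₂ + 2 * γ₁ ^ 2 * S₀ + 2 * γ₂ * S₀
      + 3 * γ₁ * S₀ ^ 2 - S₀ ^ 3 + 14 * S₀₁ + 5 * γ₁ * S₁ - 5 * S₀ * S₁ - 6 * S₂))
  rw [hT, coeff3_mul, hP0, hP1, hP2, hP3, hT0, hT1, hT2, hT3,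
    hS₁, hS₂, hS₀₁, hS₀, hγ₁, hγ₂]
  field_simp
  ring
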